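/- Let p_τ(θ) = ∫_0^∞ (2πλ²)^{−1/2} exp(−θ²/(2λ²)) · (2τ/(π(τ² + λ²))) dλ be the marginal density of the horseshoe prior with global parameter τ > 0. Then (i) p_τ has a pole at zero: p_τ(θ) → ∞ as θ → 0; and (ii) p_τ has Cauchy-like tails: there exist constants 0 < c ≤ C and T > 0 (depending on τ) such that c/θ² ≤ p_τ(θ) ≤ C/θ² for all |θ| ≥ T. -/

import Mathlib

open Filter

/-- The marginal density of the horseshoe prior with global parameter `τ`:
`p_τ(θ) = ∫_0^∞ (2πλ²)^{-1/2} exp(-θ²/(2λ²)) · 2τ/(π(τ² + λ²)) dλ`. -/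
noncomputable def horseshoeDensity (τ θ : ℝ) : ℝ :=
  ∫ l in Set.Ioi (0 : ℝ),
    Real.exp (-(θ ^ 2) / (2 * l ^ 2)) / Real.sqrt (2 * Real.pi * l ^ 2) *
      (2 * τ / (Real.pi * (τ ^ 2 + l ^ 2)))

namespace HorseshoeAux

open MeasureTheory Set

noncomputable def g (τ θ l : ℝ) : ℝ :=
  Real.exp (-(θ ^ 2) / (2 * l ^ 2)) / Real.sqrt (2 * Real.pi * l ^ 2) *
    (2 * τ / (Real.pi * (τ ^ 2 + l ^ 2)))

lemma density_eq (τ θ : ℝ) : horseshoeDensity τ θ = ∫ l in Ioi (0:ℝ), g τ θ l := rfl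

lemma g_meas (τ θ : ℝ) : Measurable (g τ θ) := by
  unfold g; fun_prop

lemma g_nonneg {τ : ℝ} (hτ : 0 < τ) (θ l : ℝ) : 0 ≤ g τ θ l := by
  unfold g; positivity

lemma sqrt_fac {l : ℝ} (hl : 0 < l) :
    Real.sqrt (2 * Real.pi * l ^ 2) = Real.sqrt (2 * Real.pi) * l := by
  rw [Real.sqrt_mul (by positivity), Real.sqrt_sq hl.le]

lemma exp_neg_le {x : ℝ} (hx : 0 < x) : Real.exp (-x) ≤ 4 / x ^ 2 := by
  have h2 : x / 2 + 1 ≤ Real.exp (x / 2) := Real.add_one_le_exp _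
  have h3 : Real.exp (x / 2) * Real.exp (x / 2) = Real.exp x := by
    rw [← Real.exp_add]; ring_nf
  have h1 : x ^ 2 / 4 ≤ Real.exp x := by nlinarith [Real.exp_pos (x / 2)]
  have hx2 : 0 < x ^ 2 / 4 := by positivity
  rw [Real.exp_neg]
  calc (Real.exp x)⁻¹ ≤ (x ^ 2 / 4)⁻¹ := by
        exact inv_anti₀ hx2 h1
    _ = 4 / x ^ 2 := by rw [inv_div]

lemma exp_le_A {θ l : ℝ} (hθ : θ ≠ 0) (hl : 0 < l) :
    Real.exp (-(θ ^ 2) / (2 * l ^ 2)) ≤ 16 * l ^ 4 / θ ^ 4 := by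
  have hx : 0 < θ ^ 2 / (2 * l ^ 2) := by positivity
  have h := exp_neg_le hx
  rw [← neg_div] at h
  refine h.trans_eq ?_
  field_simp
  ring

/-- Upper bound valid for all `l > 0`. -/
lemma g_le_A {τ θ l : ℝ} (hτ : 0 < τ) (hθ : θ ≠ 0) (hl : 0 < l) :
    g τ θ l ≤ 32 * τ / (Real.sqrt (2 * Real.pi) * Real.pi) * l / θ ^ 4 := by
  have hs : 0 < Real.sqrt (2 * Real.pi) := by positivity
  unfold g
  rw [sqrt_fac hl]
  calc Real.exp (-(θ ^ 2) / (2 * l ^ 2)) / (Real.sqrt (2 * Real.pi) * l) *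
          (2 * τ / (Real.pi * (τ ^ 2 + l ^ 2)))
      ≤ (16 * l ^ 4 / θ ^ 4) / (Real.sqrt (2 * Real.pi) * l) *
          (2 * τ / (Real.pi * l ^ 2)) := by
        gcongr
        · exact exp_le_A hθ hl
        · nlinarith []
    _ = 32 * τ / (Real.sqrt (2 * Real.pi) * Real.pi) * l / θ ^ 4 := by
        field_simp
        ring

/-- Upper bound valid for `l > |θ|`. -/
lemma g_le_B {τ θ l : ℝ} (hτ : 0 < τ) (hl : 0 < l) :
    g τ θ l ≤ 2 * τ / (Real.sqrt (2 * Real.pi) * Real.pi) * l ^ ((-3 : ℝ)) := by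
  have hs : 0 < Real.sqrt (2 * Real.pi) := by positivity
  have hr : l ^ ((-3 : ℝ)) = (l ^ (3 : ℕ) : ℝ)⁻¹ := by
    rw [Real.rpow_neg hl.le, show ((3:ℝ)) = ((3:ℕ):ℝ) by norm_num, Real.rpow_natCast]
  unfold g
  rw [sqrt_fac hl, hr]
  have hexp : Real.exp (-(θ ^ 2) / (2 * l ^ 2)) ≤ 1 := by
    rw [Real.exp_le_one_iff]
    exact div_nonpos_of_nonpos_of_nonneg (neg_nonpos.2 (sq_nonneg θ)) (by positivity)
  calc Real.exp (-(θ ^ 2) / (2 * l ^ 2)) / (Real.sqrt (2 * Real.pi) * l) *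
          (2 * τ / (Real.pi * (τ ^ 2 + l ^ 2)))
      ≤ 1 / (Real.sqrt (2 * Real.pi) * l) * (2 * τ / (Real.pi * l ^ 2)) := by
        gcongr
        nlinarith []
    _ = 2 * τ / (Real.sqrt (2 * Real.pi) * Real.pi) * (l ^ (3 : ℕ) : ℝ)⁻¹ := by
        field_simp

lemma half_le_exp : (2 : ℝ)⁻¹ ≤ Real.exp (-(2⁻¹ : ℝ)) := by
  have h1 : Real.exp (2⁻¹ : ℝ) * Real.exp (2⁻¹ : ℝ) = Real.exp 1 := by
    rw [← Real.exp_add]; norm_num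
  have h2 : Real.exp 1 < 2.7182818286 := Real.exp_one_lt_d9
  have hp : (0:ℝ) < Real.exp (2⁻¹ : ℝ) := Real.exp_pos _
  have h3 : Real.exp (2⁻¹ : ℝ) ≤ 2 := by nlinarith
  rw [Real.exp_neg]
  have hq : (0:ℝ) < (Real.exp (2⁻¹ : ℝ))⁻¹ := inv_pos.2 hp
  have h4 : Real.exp (2⁻¹ : ℝ) * (Real.exp (2⁻¹ : ℝ))⁻¹ = 1 := mul_inv_cancel₀ hp.ne'
  nlinarith

lemma exp_ge_half {θ l : ℝ} (hθl : θ ^ 2 ≤ l ^ 2) (hl : 0 < l) :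
    (2 : ℝ)⁻¹ ≤ Real.exp (-(θ ^ 2) / (2 * l ^ 2)) := by
  refine half_le_exp.trans (Real.exp_le_exp.2 ?_)
  rw [neg_div]
  rw [neg_le_neg_iff]
  rw [div_le_iff₀ (by positivity)]
  nlinarith

/-- Lower bound for the pole: `0 < |θ| ≤ l ≤ 1`. -/
lemma g_ge_D {τ θ l : ℝ} (hτ : 0 < τ) (hal : |θ| ≤ l) (hl : 0 < l) (hl1 : l ≤ 1) :
    τ / (Real.sqrt (2 * Real.pi) * Real.pi * (τ ^ 2 + 1)) * l⁻¹ ≤ g τ θ l := by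
  have hs : 0 < Real.sqrt (2 * Real.pi) := by positivity
  have hθl : θ ^ 2 ≤ l ^ 2 := by
    rw [← sq_abs θ]; exact pow_le_pow_left₀ (abs_nonneg θ) hal 2
  have hexp := exp_ge_half hθl hl
  unfold g
  rw [sqrt_fac hl]
  calc τ / (Real.sqrt (2 * Real.pi) * Real.pi * (τ ^ 2 + 1)) * l⁻¹
      = 2⁻¹ / (Real.sqrt (2 * Real.pi) * l) * (2 * τ / (Real.pi * (τ ^ 2 + 1))) := by
        field_simp
    _ ≤ Real.exp (-(θ ^ 2) / (2 * l ^ 2)) / (Real.sqrt (2 * Real.pi) * l) *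
          (2 * τ / (Real.pi * (τ ^ 2 + l ^ 2))) := by
        gcongr
        nlinarith

/-- Lower bound for the tails: `τ ≤ |θ| < l ≤ 2|θ|`. -/
lemma g_ge_C {τ θ l : ℝ} (hτ : 0 < τ) (hτθ : τ ≤ |θ|) (h1 : |θ| < l) (h2 : l ≤ 2 * |θ|) :
    τ / (10 * Real.sqrt (2 * Real.pi) * Real.pi) / (θ ^ 2 * |θ|) ≤ g τ θ l := by
  have ha : 0 < |θ| := lt_of_lt_of_le hτ hτθ
  have hl : 0 < l := lt_trans ha h1
  have hs : 0 < Real.sqrt (2 * Real.pi) := by positivity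
  have hθ2 : (0:ℝ) < θ ^ 2 := by rw [← sq_abs]; positivity
  have hθl : θ ^ 2 ≤ l ^ 2 := by
    rw [← sq_abs θ]; exact pow_le_pow_left₀ (abs_nonneg θ) h1.le 2
  have hexp := exp_ge_half hθl hl
  have hτ2 : τ ^ 2 ≤ θ ^ 2 := by
    rw [← sq_abs θ]; exact pow_le_pow_left₀ hτ.le hτθ 2
  have hl2 : l ^ 2 ≤ 4 * θ ^ 2 := by
    rw [← sq_abs θ]; nlinarith [abs_nonneg θ]
  unfold g
  rw [sqrt_fac hl]
  calc τ / (10 * Real.sqrt (2 * Real.pi) * Real.pi) / (θ ^ 2 * |θ|)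
      = 2⁻¹ / (Real.sqrt (2 * Real.pi) * (2 * |θ|)) * (2 * τ / (Real.pi * (5 * θ ^ 2))) := by
        field_simp; ring
    _ ≤ Real.exp (-(θ ^ 2) / (2 * l ^ 2)) / (Real.sqrt (2 * Real.pi) * l) *
          (2 * τ / (Real.pi * (τ ^ 2 + l ^ 2))) := by
        gcongr
        nlinarith

lemma g_integrableOn {τ θ : ℝ} (hτ : 0 < τ) (hθ : θ ≠ 0) :
    MeasureTheory.IntegrableOn (g τ θ) (Ioi (0:ℝ)) := by
  have ha : 0 < |θ| := abs_pos.2 hθ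
  rw [← Ioc_union_Ioi_eq_Ioi ha.le]
  apply IntegrableOn.union
  · have hb : IntegrableOn (fun l => 32 * τ / (Real.sqrt (2 * Real.pi) * Real.pi) * l / θ ^ 4)
        (Ioc 0 |θ|) := Continuous.integrableOn_Ioc (by continuity)
    refine hb.mono' ((g_meas τ θ).aestronglyMeasurable) ?_
    rw [ae_restrict_iff' measurableSet_Ioc]
    filter_upwards with l hl
    rw [Real.norm_eq_abs, abs_of_nonneg (g_nonneg hτ _ _)]
    exact g_le_A hτ hθ hl.1
  · have hb : IntegrableOn (fun l => 2 * τ / (Real.sqrt (2 * Real.pi) * Real.pi) * l ^ ((-3:ℝ)))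
        (Ioi |θ|) := (integrableOn_Ioi_rpow_of_lt (by norm_num) ha).const_mul _
    refine hb.mono' ((g_meas τ θ).aestronglyMeasurable) ?_
    rw [ae_restrict_iff' measurableSet_Ioi]
    filter_upwards with l hl
    rw [Real.norm_eq_abs, abs_of_nonneg (g_nonneg hτ _ _)]
    exact g_le_B hτ (ha.trans hl)

lemma tail_upper {τ θ : ℝ} (hτ : 0 < τ) (hθ : θ ≠ 0) :
    horseshoeDensity τ θ ≤ 17 * τ / (Real.sqrt (2 * Real.pi) * Real.pi) / θ ^ 2 := by
  have ha : 0 < |θ| := abs_pos.2 hθ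
  have hs : 0 < Real.sqrt (2 * Real.pi) := by positivity
  have hπ : (0:ℝ) < Real.pi := Real.pi_pos
  have hθ2 : (0:ℝ) < θ ^ 2 := by positivity
  have hint := g_integrableOn hτ hθ
  have h1 : IntegrableOn (g τ θ) (Ioc 0 |θ|) := hint.mono_set (fun x hx => hx.1)
  have h2 : IntegrableOn (g τ θ) (Ioi |θ|) := hint.mono_set (Ioi_subset_Ioi ha.le)
  rw [density_eq, ← Ioc_union_Ioi_eq_Ioi ha.le,
    setIntegral_union (Ioc_disjoint_Ioi le_rfl) measurableSet_Ioi h1 h2]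
  have e1 : ∫ l in Ioc 0 |θ|, g τ θ l
      ≤ 16 * τ / (Real.sqrt (2 * Real.pi) * Real.pi) / θ ^ 2 := by
    calc ∫ l in Ioc 0 |θ|, g τ θ l
        ≤ ∫ l in Ioc 0 |θ|, 32 * τ / (Real.sqrt (2 * Real.pi) * Real.pi) * l / θ ^ 4 := by
          refine setIntegral_mono_on h1 (Continuous.integrableOn_Ioc (by continuity))
            measurableSet_Ioc (fun l hl => g_le_A hτ hθ hl.1)
      _ = 16 * τ / (Real.sqrt (2 * Real.pi) * Real.pi) / θ ^ 2 := by
          have hrw : ∀ l : ℝ, 32 * τ / (Real.sqrt (2 * Real.pi) * Real.pi) * l / θ ^ 4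
              = (32 * τ / (Real.sqrt (2 * Real.pi) * Real.pi) / θ ^ 4) * l := fun l => by ring
          simp_rw [hrw]
          rw [MeasureTheory.integral_const_mul, ← intervalIntegral.integral_of_le ha.le]
          rw [show (∫ x in (0:ℝ)..|θ|, x) = (|θ| ^ 2 - 0 ^ 2) / 2 from integral_id, sq_abs]
          field_simp
          ring
  have e2 : ∫ l in Ioi |θ|, g τ θ l
      ≤ τ / (Real.sqrt (2 * Real.pi) * Real.pi) / θ ^ 2 := by
    calc ∫ l in Ioi |θ|, g τ θ l
        ≤ ∫ l in Ioi |θ|, 2 * τ / (Real.sqrt (2 * Real.pi) * Real.pi) * l ^ ((-3:ℝ)) := by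
          refine setIntegral_mono_on h2
            ((integrableOn_Ioi_rpow_of_lt (by norm_num) ha).const_mul _)
            measurableSet_Ioi (fun l hl => g_le_B hτ (ha.trans hl))
      _ = τ / (Real.sqrt (2 * Real.pi) * Real.pi) / θ ^ 2 := by
          rw [MeasureTheory.integral_const_mul, integral_Ioi_rpow_of_lt (by norm_num) ha]
          norm_num
          ring
  refine (add_le_add e1 e2).trans (le_of_eq ?_)
  field_simp
  ring

lemma tail_lower {τ θ : ℝ} (hτ : 0 < τ) (hτθ : τ ≤ |θ|) :
    τ / (10 * Real.sqrt (2 * Real.pi) * Real.pi) / θ ^ 2 ≤ horseshoeDensity τ θ := by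
  have ha : 0 < |θ| := lt_of_lt_of_le hτ hτθ
  have hθ : θ ≠ 0 := abs_pos.1 ha
  have hs : 0 < Real.sqrt (2 * Real.pi) := by positivity
  have hπ : (0:ℝ) < Real.pi := Real.pi_pos
  have hθ2 : (0:ℝ) < θ ^ 2 := by positivity
  rw [density_eq]
  have hsub : Ioc |θ| (2 * |θ|) ⊆ Ioi (0:ℝ) := fun x hx => lt_trans ha hx.1
  have step1 : ∫ l in Ioc |θ| (2 * |θ|), g τ θ l ≤ ∫ l in Ioi (0:ℝ), g τ θ l :=
    setIntegral_mono_set (g_integrableOn hτ hθ)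
      (Filter.Eventually.of_forall (fun l => g_nonneg hτ _ _))
      (HasSubset.Subset.eventuallyLE hsub)
  refine le_trans ?_ step1
  have hconst : ∫ _l in Ioc |θ| (2 * |θ|),
      (τ / (10 * Real.sqrt (2 * Real.pi) * Real.pi) / (θ ^ 2 * |θ|))
      = τ / (10 * Real.sqrt (2 * Real.pi) * Real.pi) / θ ^ 2 := by
    rw [setIntegral_const, Real.volume_real_Ioc, show 2 * |θ| - |θ| = |θ| by ring,
      max_eq_left ha.le, smul_eq_mul]
    field_simp
  rw [← hconst]
  refine setIntegral_mono_on ?_ ((g_integrableOn hτ hθ).mono_set hsub) measurableSet_Ioc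
    (fun l hl => g_ge_C hτ hτθ hl.1 hl.2)
  exact integrableOn_const (by rw [Real.volume_Ioc]; exact ENNReal.ofReal_ne_top)

lemma pole_lower {τ θ : ℝ} (hτ : 0 < τ) (h0 : θ ≠ 0) (h1 : |θ| < 1) :
    τ / (Real.sqrt (2 * Real.pi) * Real.pi * (τ ^ 2 + 1)) * (-Real.log |θ|)
      ≤ horseshoeDensity τ θ := by
  have ha : 0 < |θ| := abs_pos.2 h0
  have hs : 0 < Real.sqrt (2 * Real.pi) := by positivity
  set K := τ / (Real.sqrt (2 * Real.pi) * Real.pi * (τ ^ 2 + 1)) with hK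
  rw [density_eq]
  have hsub : Ioc |θ| 1 ⊆ Ioi (0:ℝ) := fun x hx => lt_trans ha hx.1
  have step1 : ∫ l in Ioc |θ| 1, g τ θ l ≤ ∫ l in Ioi (0:ℝ), g τ θ l :=
    setIntegral_mono_set (g_integrableOn hτ h0)
      (Filter.Eventually.of_forall (fun l => g_nonneg hτ _ _))
      (HasSubset.Subset.eventuallyLE hsub)
  refine le_trans ?_ step1
  have hKi : IntervalIntegrable (fun l : ℝ => K * l⁻¹) volume |θ| 1 := by
    refine IntervalIntegrable.const_mul ?_ K
    refine intervalIntegral.intervalIntegrable_inv (fun x hx => ?_) continuousOn_id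
    rw [Set.uIcc_of_le h1.le] at hx
    exact (lt_of_lt_of_le ha hx.1).ne'
  calc K * (-Real.log |θ|) = ∫ l in Ioc |θ| 1, K * l⁻¹ := by
        rw [← intervalIntegral.integral_of_le h1.le, intervalIntegral.integral_const_mul,
          integral_inv_of_pos ha one_pos, one_div, Real.log_inv]
    _ ≤ ∫ l in Ioc |θ| 1, g τ θ l := by
        refine setIntegral_mono_on hKi.1 ((g_integrableOn hτ h0).mono_set hsub)
          measurableSet_Ioc (fun l hl => g_ge_D hτ hl.1.le (lt_trans ha hl.1) hl.2)

end HorseshoeAux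

/-- The horseshoe marginal density has a pole at zero (`p_τ(θ) → ∞ as θ → 0`) and
Cauchy-like tails: `c/θ² ≤ p_τ(θ) ≤ C/θ²` for all `|θ| ≥ T`. -/
theorem statement10 (τ : ℝ) (hτ : 0 < τ) :
    Tendsto (horseshoeDensity τ) (nhdsWithin 0 {θ : ℝ | θ ≠ 0}) atTop ∧
    ∃ c C T : ℝ, 0 < c ∧ c ≤ C ∧ 0 < T ∧
      ∀ θ : ℝ, T ≤ |θ| →
        c / θ ^ 2 ≤ horseshoeDensity τ θ ∧ horseshoeDensity τ θ ≤ C / θ ^ 2 := by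
  constructor
  · have hs : 0 < Real.sqrt (2 * Real.pi) := by positivity
    have hK0 : 0 < τ / (Real.sqrt (2 * Real.pi) * Real.pi * (τ ^ 2 + 1)) := by
      have := Real.pi_pos; positivity
    have habs : Tendsto (fun θ : ℝ => |θ|) (nhdsWithin 0 {θ : ℝ | θ ≠ 0})
        (nhdsWithin 0 (Set.Ioi 0)) := by
      rw [tendsto_nhdsWithin_iff]
      refine ⟨(continuous_abs.tendsto' 0 0 abs_zero).mono_left nhdsWithin_le_nhds, ?_⟩
      exact eventually_mem_nhdsWithin.mono (fun x hx => abs_pos.2 hx)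
    have hlog : Tendsto (fun θ : ℝ => -Real.log |θ|) (nhdsWithin 0 {θ : ℝ | θ ≠ 0}) atTop :=
      tendsto_neg_atTop_iff.2 (Real.tendsto_log_nhdsGT_zero.comp habs)
    have hKt : Tendsto (fun θ : ℝ => τ / (Real.sqrt (2 * Real.pi) * Real.pi * (τ ^ 2 + 1)) *
        (-Real.log |θ|)) (nhdsWithin 0 {θ : ℝ | θ ≠ 0}) atTop := hlog.const_mul_atTop hK0
    refine tendsto_atTop_mono' _ ?_ hKt
    have h1 : ∀ᶠ θ : ℝ in nhdsWithin 0 {θ : ℝ | θ ≠ 0}, |θ| < 1 := by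
      refine Filter.Eventually.filter_mono nhdsWithin_le_nhds ?_
      filter_upwards [Metric.ball_mem_nhds (0:ℝ) one_pos] with x hx
      simpa [Real.dist_eq] using hx
    have h2 : ∀ᶠ θ : ℝ in nhdsWithin 0 {θ : ℝ | θ ≠ 0}, θ ≠ 0 := eventually_mem_nhdsWithin
    filter_upwards [h1, h2] with θ hθ1 hθ2
    exact HorseshoeAux.pole_lower hτ hθ2 hθ1
  · have hs : 0 < Real.sqrt (2 * Real.pi) := by positivity
    have hπ : (0:ℝ) < Real.pi := Real.pi_pos
    refine ⟨τ / (10 * Real.sqrt (2 * Real.pi) * Real.pi),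
      17 * τ / (Real.sqrt (2 * Real.pi) * Real.pi), τ, by positivity, ?_, hτ, ?_⟩
    · rw [div_le_div_iff₀ (by positivity) (by positivity)]
      nlinarith [mul_pos (mul_pos hτ hs) hπ]
    · intro θ hT
      have hθ : θ ≠ 0 := by
        intro h; rw [h, abs_zero] at hT; linarith
      exact ⟨HorseshoeAux.tail_lower hτ hT, HorseshoeAux.tail_upper hτ hθ⟩
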